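/- Let S ∈ ℝ^{d×K}, U ∈ ℝ^{m×K}, x ∈ ℝ^d, h ∈ ℝ^m, λ ≥ 0, f(g) = (1/2)‖x − Sg‖₂² + (1/2)‖h − Ug‖₂², E(g) = f(g) + λ‖g‖₁, and L = ‖SᵀS + UᵀU‖_op with L > 0. Let 0 < η ≤ 1/L, let g ∈ ℝ^K satisfy ‖g‖₀ ≤ k, and let g⁺ be obtained from g by the hard-k proximal-gradient step: g⁺ minimizes w ↦ (1/(2η))‖w − (g − η∇f(g))‖₂² + λ‖w‖₁ over {w : ‖w‖₀ ≤ k}. Then E(g⁺) ≤ E(g) − (1/(2η) − L/2)·‖g⁺ − g‖₂²; in particular E(g⁺) ≤ E(g), so the layer energy decreases monotonically along the hard-k iteration. -/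

import Mathlib

open Matrix
open scoped Classical

/-- ℓ0 "norm": the number of nonzero entries of a vector. -/
noncomputable def l0norm {K : ℕ} (g : Fin K → ℝ) : ℕ :=
  (Finset.univ.filter fun i => g i ≠ 0).card

/-- Smooth part of the layer energy:
`f(g) = ½‖x − Sg‖₂² + ½‖h − Ug‖₂²`. -/
noncomputable def smoothPart {d m K : ℕ} (S : Matrix (Fin d) (Fin K) ℝ)
    (U : Matrix (Fin m) (Fin K) ℝ) (x : Fin d → ℝ) (h : Fin m → ℝ)
    (g : Fin K → ℝ) : ℝ :=
  (1 / 2) * (∑ a, (x a - S.mulVec g a) ^ 2) + (1 / 2) * (∑ b, (h b - U.mulVec g b) ^ 2)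

/-- Layer energy `E(g) = f(g) + λ‖g‖₁`. -/
noncomputable def energy {d m K : ℕ} (S : Matrix (Fin d) (Fin K) ℝ)
    (U : Matrix (Fin m) (Fin K) ℝ) (x : Fin d → ℝ) (h : Fin m → ℝ) (lam : ℝ)
    (g : Fin K → ℝ) : ℝ :=
  smoothPart S U x h g + lam * ∑ i, |g i|

/-- Gradient of the smooth part: `∇f(g) = Sᵀ(Sg − x) + Uᵀ(Ug − h)`. -/
noncomputable def gradSmooth {d m K : ℕ} (S : Matrix (Fin d) (Fin K) ℝ)
    (U : Matrix (Fin m) (Fin K) ℝ) (x : Fin d → ℝ) (h : Fin m → ℝ)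
    (g : Fin K → ℝ) : Fin K → ℝ :=
  Sᵀ.mulVec (S.mulVec g - x) + Uᵀ.mulVec (U.mulVec g - h)

/-- ℓ2 operator (spectral) norm of a square matrix acting on Euclidean space. -/
noncomputable def l2OpNorm {K : ℕ} (M : Matrix (Fin K) (Fin K) ℝ) : ℝ :=
  ‖LinearMap.toContinuousLinearMap (Matrix.toEuclideanLin M)‖

lemma quad_expand' {d K : ℕ} (S : Matrix (Fin d) (Fin K) ℝ) (x : Fin d → ℝ)
    (g w : Fin K → ℝ) :
    ∑ a, (x a - S.mulVec w a) ^ 2 =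
      ∑ a, (x a - S.mulVec g a) ^ 2
        + 2 * ∑ a, (S.mulVec g a - x a) * S.mulVec (w - g) a
        + ∑ a, (S.mulVec (w - g) a) ^ 2 := by
  have hw : S.mulVec w = S.mulVec g + S.mulVec (w - g) := by
    rw [← Matrix.mulVec_add, add_sub_cancel]
  rw [hw, Finset.mul_sum, ← Finset.sum_add_distrib, ← Finset.sum_add_distrib]
  apply Finset.sum_congr rfl
  intro a _
  simp only [Pi.add_apply]
  ring

lemma transpose_dot {n K : ℕ} (M : Matrix (Fin n) (Fin K) ℝ)
    (y : Fin n → ℝ) (v : Fin K → ℝ) :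
    ∑ i, (Mᵀ.mulVec y) i * v i = ∑ a, y a * M.mulVec v a := by
  have : (Mᵀ.mulVec y) ⬝ᵥ v = y ⬝ᵥ M.mulVec v := by
    rw [Matrix.mulVec_transpose, ← Matrix.dotProduct_mulVec]
  simpa [dotProduct] using this

lemma grad_dot' {d m K : ℕ} (S : Matrix (Fin d) (Fin K) ℝ)
    (U : Matrix (Fin m) (Fin K) ℝ) (x : Fin d → ℝ) (h : Fin m → ℝ)
    (g v : Fin K → ℝ) :
    ∑ i, gradSmooth S U x h g i * v i =
      ∑ a, (S.mulVec g a - x a) * S.mulVec v a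
        + ∑ b, (U.mulVec g b - h b) * U.mulVec v b := by
  simp only [gradSmooth, Pi.add_apply, add_mul, Finset.sum_add_distrib]
  rw [transpose_dot S (S.mulVec g - x) v, transpose_dot U (U.mulVec g - h) v]
  simp [Pi.sub_apply]

/-- Exact second-order expansion of the smooth part. -/
lemma smooth_taylor {d m K : ℕ} (S : Matrix (Fin d) (Fin K) ℝ)
    (U : Matrix (Fin m) (Fin K) ℝ) (x : Fin d → ℝ) (h : Fin m → ℝ)
    (g w : Fin K → ℝ) :
    smoothPart S U x h w =
      smoothPart S U x h g + ∑ i, gradSmooth S U x h g i * (w i - g i)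
        + (1 / 2) * (∑ a, (S.mulVec (w - g) a) ^ 2 + ∑ b, (U.mulVec (w - g) b) ^ 2) := by
  have hS := quad_expand' S x g w
  have hU := quad_expand' U h g w
  have hg := grad_dot' S U x h g (w - g)
  simp only [smoothPart, Pi.sub_apply] at *
  rw [hS, hU, hg]
  ring

/-- Quadratic form bounded by the operator norm. -/
lemma quad_bound {d m K : ℕ} (S : Matrix (Fin d) (Fin K) ℝ)
    (U : Matrix (Fin m) (Fin K) ℝ) (v : Fin K → ℝ) :
    ∑ a, (S.mulVec v a) ^ 2 + ∑ b, (U.mulVec v b) ^ 2 ≤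
      l2OpNorm (Sᵀ * S + Uᵀ * U) * ∑ i, v i ^ 2 := by
  set Q : Matrix (Fin K) (Fin K) ℝ := Sᵀ * S + Uᵀ * U with hQ
  have hquad : ∑ i, (Q.mulVec v) i * v i
      = ∑ a, (S.mulVec v a) ^ 2 + ∑ b, (U.mulVec v b) ^ 2 := by
    have : Q.mulVec v = Sᵀ.mulVec (S.mulVec v) + Uᵀ.mulVec (U.mulVec v) := by
      simp [hQ, Matrix.add_mulVec, Matrix.mulVec_mulVec]
    rw [this]
    simp only [Pi.add_apply, add_mul, Finset.sum_add_distrib]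
    rw [transpose_dot S (S.mulVec v) v, transpose_dot U (U.mulVec v) v]
    simp [sq]
  set v' : EuclideanSpace ℝ (Fin K) := (WithLp.equiv 2 (Fin K → ℝ)).symm v with hv'
  have happ : Matrix.toEuclideanLin Q v' = (WithLp.equiv 2 (Fin K → ℝ)).symm (Q.mulVec v) := by
    rw [hv', WithLp.equiv_symm_apply, Matrix.toEuclideanLin_apply_piLp_toLp]
  have hinner : (inner ℝ (Matrix.toEuclideanLin Q v') v' : ℝ) = ∑ i, (Q.mulVec v) i * v i := by
    rw [happ]
    simp [PiLp.inner_apply, RCLike.inner_apply, hv', WithLp.equiv_symm_apply, PiLp.toLp_apply, mul_comm]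
  have hnorm2 : ‖v'‖ * ‖v'‖ = ∑ i, v i ^ 2 := by
    rw [← real_inner_self_eq_norm_mul_norm, hv', WithLp.equiv_symm_apply, PiLp.inner_apply]
    simp [RCLike.inner_apply, PiLp.toLp_apply, sq]
  have h1 : (inner ℝ (Matrix.toEuclideanLin Q v') v' : ℝ) ≤ ‖Matrix.toEuclideanLin Q v'‖ * ‖v'‖ :=
    real_inner_le_norm _ _
  have h2 : ‖Matrix.toEuclideanLin Q v'‖ ≤ l2OpNorm Q * ‖v'‖ := by
    have h := (LinearMap.toContinuousLinearMap (Matrix.toEuclideanLin Q)).le_opNorm v'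
    rw [LinearMap.coe_toContinuousLinearMap'] at h
    rw [l2OpNorm]
    exact h
  have hv'nn : (0:ℝ) ≤ ‖v'‖ := norm_nonneg _
  calc ∑ a, (S.mulVec v a) ^ 2 + ∑ b, (U.mulVec v b) ^ 2
      = (inner ℝ (Matrix.toEuclideanLin Q v') v' : ℝ) := by rw [hinner, hquad]
    _ ≤ ‖Matrix.toEuclideanLin Q v'‖ * ‖v'‖ := h1
    _ ≤ (l2OpNorm Q * ‖v'‖) * ‖v'‖ := mul_le_mul_of_nonneg_right h2 hv'nn
    _ = l2OpNorm Q * ∑ i, v i ^ 2 := by rw [mul_assoc, hnorm2]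


/-- Energy descent of the hard-`k` proximal-gradient step: if `g⁺` minimizes
`w ↦ (1/(2η))‖w − (g − η∇f(g))‖₂² + λ‖w‖₁` over the `k`-sparse vectors, then
`E(g⁺) ≤ E(g) − (1/(2η) − L/2)‖g⁺ − g‖₂²`; in particular `E(g⁺) ≤ E(g)`. -/
theorem hardk_energy_descent {d m K : ℕ}
    (S : Matrix (Fin d) (Fin K) ℝ) (U : Matrix (Fin m) (Fin K) ℝ)
    (x : Fin d → ℝ) (h : Fin m → ℝ) (lam : ℝ) (hlam : 0 ≤ lam)
    (L : ℝ) (hLdef : L = l2OpNorm (Sᵀ * S + Uᵀ * U)) (hL : 0 < L)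
    (η : ℝ) (hη0 : 0 < η) (hη : η ≤ 1 / L)
    (k : ℕ) (g : Fin K → ℝ) (hg : l0norm g ≤ k)
    (gplus : Fin K → ℝ) (hplus_sparse : l0norm gplus ≤ k)
    (hplus_min : ∀ w : Fin K → ℝ, l0norm w ≤ k →
      (1 / (2 * η)) * (∑ i, (gplus i - (g - η • gradSmooth S U x h g) i) ^ 2) +
          lam * ∑ i, |gplus i| ≤
        (1 / (2 * η)) * (∑ i, (w i - (g - η • gradSmooth S U x h g) i) ^ 2) +
          lam * ∑ i, |w i|) :
    energy S U x h lam gplus ≤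
        energy S U x h lam g - (1 / (2 * η) - L / 2) * ∑ i, (gplus i - g i) ^ 2 ∧
      energy S U x h lam gplus ≤ energy S U x h lam g := by
  set Gr := gradSmooth S U x h g with hGr
  have hmin := hplus_min g hg
  -- rewrite the two quadratic sums
  have e1 : ∑ i, (gplus i - (g - η • Gr) i) ^ 2
      = ∑ i, (gplus i - g i) ^ 2 + 2 * η * ∑ i, Gr i * (gplus i - g i)
        + η ^ 2 * ∑ i, Gr i ^ 2 := by
    simp only [Pi.sub_apply, Pi.smul_apply, smul_eq_mul, Finset.mul_sum,
      ← Finset.sum_add_distrib]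
    apply Finset.sum_congr rfl
    intro i _
    ring
  have e2 : ∑ i, (g i - (g - η • Gr) i) ^ 2 = η ^ 2 * ∑ i, Gr i ^ 2 := by
    simp only [Pi.sub_apply, Pi.smul_apply, smul_eq_mul, Finset.mul_sum]
    apply Finset.sum_congr rfl
    intro i _
    ring
  rw [e1, e2] at hmin
  have hη0' : (0:ℝ) < 2 * η := by linarith
  -- key inequality: (1/(2η)) ∑Δ² + ∑ Gr·Δ + lam∑|g⁺| ≤ lam∑|g|
  have key : (1 / (2 * η)) * ∑ i, (gplus i - g i) ^ 2 + ∑ i, Gr i * (gplus i - g i)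
      + lam * ∑ i, |gplus i| ≤ lam * ∑ i, |g i| := by
    have expand : (1 / (2 * η)) * (∑ i, (gplus i - g i) ^ 2
        + 2 * η * ∑ i, Gr i * (gplus i - g i) + η ^ 2 * ∑ i, Gr i ^ 2)
      = (1 / (2 * η)) * ∑ i, (gplus i - g i) ^ 2 + ∑ i, Gr i * (gplus i - g i)
        + (1 / (2 * η)) * (η ^ 2 * ∑ i, Gr i ^ 2) := by
      field_simp
    rw [expand] at hmin
    linarith
  have taylor := smooth_taylor S U x h g gplus
  have qb := quad_bound S U (gplus - g)
  rw [← hLdef] at qb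
  have hQsum : ∑ i, ((gplus - g) i) ^ 2 = ∑ i, (gplus i - g i) ^ 2 := by
    simp [Pi.sub_apply]
  rw [hQsum] at qb
  have hgr' : ∑ i, gradSmooth S U x h g i * (gplus i - g i) = ∑ i, Gr i * (gplus i - g i) := by
    rw [hGr]
  rw [hgr'] at taylor
  have hsum_nonneg : (0:ℝ) ≤ ∑ i, (gplus i - g i) ^ 2 :=
    Finset.sum_nonneg fun i _ => sq_nonneg _
  have first : energy S U x h lam gplus ≤
      energy S U x h lam g - (1 / (2 * η) - L / 2) * ∑ i, (gplus i - g i) ^ 2 := by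
    simp only [energy]
    rw [taylor]
    linarith [key, qb]
  refine ⟨first, ?_⟩
  have hcoef : 0 ≤ 1 / (2 * η) - L / 2 := by
    have : L ≤ 1 / η := by
      rw [le_div_iff₀ hη0]
      calc L * η ≤ L * (1 / L) := by
            apply mul_le_mul_of_nonneg_left hη hL.le
        _ = 1 := by field_simp
    have h1 : 1 / (2 * η) = (1 / η) / 2 := by ring
    linarith
  have : 0 ≤ (1 / (2 * η) - L / 2) * ∑ i, (gplus i - g i) ^ 2 :=
    mul_nonneg hcoef hsum_nonneg
  linarith
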